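/- For every t ≥ 0, T(t) is a well-defined bounded linear operator from L²₀(ℤ_p^n) to itself; in particular, for every f ∈ L²₀(ℤ_p^n) and t > 0, the convolution K(·,t) ∗ f belongs to L²(ℚ_p^n), vanishes outside ℤ_p^n, and satisfies ∫_{ℤ_p^n} (K(·,t) ∗ f)(x) dⁿx = 0. -/

import Mathlib

open MeasureTheory Filter Topology Metric
open scoped ENNReal

noncomputable instance qpnMeasurableSpace {p : ℕ} [Fact p.Prime] {n : ℕ} :
    MeasurableSpace (Fin n → ℚ_[p]) := borel _

instance qpnBorelSpace {p : ℕ} [Fact p.Prime] {n : ℕ} :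
    BorelSpace (Fin n → ℚ_[p]) := ⟨rfl⟩

namespace PadicHeat

variable {p : ℕ} [Fact p.Prime] {n : ℕ}

/-- The pairing `ξ·x = Σ_j ξ_j x_j` on `ℚ_p^n`. -/
noncomputable def dotQ (ξ x : Fin n → ℚ_[p]) : ℚ_[p] := ∑ j, ξ j * x j

/-- The heat kernel `K(x,t) = ∫_{ℚ_p^n∖ℤ_p^n} ψ(−x·ξ) e^{−tA(ξ)} dⁿξ`. -/
noncomputable def heatK (μ : Measure (Fin n → ℚ_[p])) (ψ : ℚ_[p] → ℂ)
    (A : (Fin n → ℚ_[p]) → ℝ) (t : ℝ) (x : Fin n → ℚ_[p]) : ℂ :=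
  ∫ ξ in {ξ : Fin n → ℚ_[p] | 1 < ‖ξ‖}, ψ (-dotQ x ξ) * (Real.exp (-(t * A ξ)) : ℂ) ∂μ

open Classical in
/-- The semigroup `T(t)`: the identity for `t = 0` and convolution with `K(·,t)` for `t ≠ 0`. -/
noncomputable def heatT (μ : Measure (Fin n → ℚ_[p])) (ψ : ℚ_[p] → ℂ)
    (A : (Fin n → ℚ_[p]) → ℝ) (t : ℝ) (f : (Fin n → ℚ_[p]) → ℂ)
    (x : Fin n → ℚ_[p]) : ℂ :=
  if t = 0 then f x else ∫ y, heatK μ ψ A t y * f (x - y) ∂μ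

/-- The `p`-adic Fourier transform `f̂(ξ) = ∫ ψ(ξ·x) f(x) dⁿx`. -/
noncomputable def fourierQ (μ : Measure (Fin n → ℚ_[p])) (ψ : ℚ_[p] → ℂ)
    (f : (Fin n → ℚ_[p]) → ℂ) (ξ : Fin n → ℚ_[p]) : ℂ :=
  ∫ x, ψ (dotQ ξ x) * f x ∂μ

/-- The pseudodifferential operator `A_β`, `(A_β f)(x) = ∫ ψ(−ξ·x) A(ξ) f̂(ξ) dⁿξ`. -/
noncomputable def opA (μ : Measure (Fin n → ℚ_[p])) (ψ : ℚ_[p] → ℂ)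
    (A : (Fin n → ℚ_[p]) → ℝ) (f : (Fin n → ℚ_[p]) → ℂ) (x : Fin n → ℚ_[p]) : ℂ :=
  ∫ ξ, ψ (-dotQ ξ x) * (A ξ : ℂ) * fourierQ μ ψ f ξ ∂μ

/-- Membership in the Lizorkin space `𝓛₀(ℤ_p^n)`: locally constant, supported in the unit
ball, with zero mean. -/
def MemL0 (μ : Measure (Fin n → ℚ_[p])) (f : (Fin n → ℚ_[p]) → ℂ) : Prop :=
  IsLocallyConstant f ∧ (∀ x : Fin n → ℚ_[p], 1 < ‖x‖ → f x = 0) ∧ (∫ x, f x ∂μ) = 0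

/-- Membership in `L²₀(ℤ_p^n)`: square integrable, vanishing (a.e.) outside the unit ball,
with zero mean. -/
def MemL20 (μ : Measure (Fin n → ℚ_[p])) (f : (Fin n → ℚ_[p]) → ℂ) : Prop :=
  MemLp f 2 μ ∧ (∀ᵐ x ∂μ, 1 < ‖x‖ → f x = 0) ∧ (∫ x, f x ∂μ) = 0

/-- The wavelet `ω_{γbk}(x) = p^{−nγ/2} ψ(p^{−1} k·(p^γ x − b)) Ω(‖p^γ x − b‖_p)`. -/
noncomputable def omegaFn (ψ : ℚ_[p] → ℂ) (γ : ℤ) (b : Fin n → ℚ_[p]) (k : Fin n → ℕ)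
    (x : Fin n → ℚ_[p]) : ℂ :=
  ((p : ℝ) ^ (-((n : ℝ) * (γ : ℝ)) / 2) : ℝ) *
    ψ ((p : ℚ_[p])⁻¹ * ∑ j, (k j : ℚ_[p]) * ((p : ℚ_[p]) ^ γ * x j - b j)) *
    (if ‖(fun j => (p : ℚ_[p]) ^ γ * x j - b j : Fin n → ℚ_[p])‖ ≤ 1 then 1 else 0)

end PadicHeat

open PadicHeat

section Aux

open MeasureTheory Metric Filter
open scoped ENNReal

namespace PadicHeatAux

variable {p : ℕ} [Fact p.Prime] {n : ℕ}

lemma padic_ge_of_one_lt (q : ℚ_[p]) (h : 1 < ‖q‖) : (p:ℝ) ≤ ‖q‖ := by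
  have hq : q ≠ 0 := by rintro rfl; simp at h; linarith
  rw [Padic.norm_eq_zpow_neg_valuation hq] at h ⊢
  have hp1 : (1:ℝ) < p := by exact_mod_cast (Fact.out : p.Prime).one_lt
  have hv : 0 < -q.valuation := by
    by_contra hc
    push_neg at hc
    have := zpow_le_one_of_nonpos₀ (le_of_lt hp1) hc
    linarith
  calc (p:ℝ) = (p:ℝ)^(1:ℤ) := (zpow_one _).symm
    _ ≤ _ := by
      apply zpow_le_zpow_right₀ (le_of_lt hp1); omega

lemma exists_coord_gt (y : Fin n → ℚ_[p]) (h : 1 < ‖y‖) : ∃ j, 1 < ‖y j‖ := by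
  by_contra hc
  push_neg at hc
  have := pi_norm_le_iff_of_nonneg (zero_le_one (α := ℝ)) |>.2 hc
  linarith

lemma pi_norm_add_le_max (x y : Fin n → ℚ_[p]) : ‖x + y‖ ≤ max ‖x‖ ‖y‖ := by
  rcases Nat.eq_zero_or_pos n with h | h
  · subst h
    have : x + y = 0 := Subsingleton.elim _ _
    rw [this, norm_zero]
    positivity
  · apply pi_norm_le_iff_of_nonneg (le_max_iff.2 (Or.inl (norm_nonneg _))) |>.2
    intro i
    calc ‖(x+y) i‖ = ‖x i + y i‖ := rfl
      _ ≤ max ‖x i‖ ‖y i‖ := Padic.nonarchimedean _ _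
      _ ≤ max ‖x‖ ‖y‖ := max_le_max (norm_le_pi_norm x i) (norm_le_pi_norm y i)

lemma pi_norm_add_eq (x η : Fin n → ℚ_[p]) (hη : ‖η‖ ≤ 1) (hx : 1 < ‖x‖) :
    ‖x + η‖ = ‖x‖ := by
  apply le_antisymm
  · calc ‖x + η‖ ≤ max ‖x‖ ‖η‖ := pi_norm_add_le_max x η
      _ = ‖x‖ := max_eq_left (by linarith)
  · have h2 : ‖x‖ ≤ max ‖x + η‖ ‖η‖ := by
      have := pi_norm_add_le_max (x + η) (-η)
      simpa using this
    rcases le_max_iff.1 h2 with h | h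
    · exact h
    · linarith

lemma range_norm_countable : (Set.range (fun x : Fin n → ℚ_[p] => ‖x‖)).Countable := by
  have hsub : Set.range (fun x : Fin n → ℚ_[p] => ‖x‖) ⊆
      insert 0 (Set.range fun k : ℤ => (p:ℝ) ^ k) := by
    rintro r ⟨x, rfl⟩
    rcases Nat.eq_zero_or_pos n with h | h
    · left
      subst h
      simp [Subsingleton.elim x 0]
    · have hne : (Finset.univ : Finset (Fin n)).Nonempty := by
        haveI : NeZero n := ⟨h.ne'⟩
        exact Finset.univ_nonempty
      obtain ⟨i, -, hi⟩ := Finset.exists_mem_eq_sup (Finset.univ : Finset (Fin n))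
        hne (fun i => ‖x i‖₊)
      have hix : ‖x‖ = ‖x i‖ := by
        rw [Pi.norm_def, hi]; rfl
      rcases eq_or_ne (x i) 0 with h0 | h0
      · left; simp only [hix, h0, norm_zero]
      · right
        refine ⟨-(x i).valuation, ?_⟩
        simp only [hix]
        exact (Padic.norm_eq_zpow_neg_valuation h0).symm
  exact Set.Countable.mono hsub ((Set.countable_range _).insert 0)

lemma measurable_g_norm (g : ℝ → ℝ) : Measurable (fun x : Fin n → ℚ_[p] => g ‖x‖) := by
  have hnorm : Measurable (fun x : Fin n → ℚ_[p] => ‖x‖) := measurable_norm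
  intro s hs
  have : (fun x : Fin n → ℚ_[p] => g ‖x‖) ⁻¹' s =
      (fun x : Fin n → ℚ_[p] => ‖x‖) ⁻¹'
        (g ⁻¹' s ∩ Set.range (fun x : Fin n → ℚ_[p] => ‖x‖)) := by
    ext x; simp [Set.mem_preimage]
  rw [this]
  exact hnorm (Set.Countable.measurableSet ((range_norm_countable).mono Set.inter_subset_right))

lemma padic_approx (m : ℕ) (q : ℚ_[p]) (h : ‖q‖ ≤ (p:ℝ)^(m:ℤ)) :
    ∃ k : Fin (p^m), ‖q - ((k:ℕ):ℚ_[p]) * ((p:ℚ_[p]))^(-(m:ℤ))‖ ≤ 1 := by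
  have hp0 : (0:ℝ) < p := by exact_mod_cast (Fact.out : p.Prime).pos
  have hz : ‖q * (p:ℚ_[p])^(m:ℤ)‖ ≤ 1 := by
    rw [norm_mul, Padic.norm_p_zpow]
    calc ‖q‖ * (p:ℝ)^(-(m:ℤ)) ≤ (p:ℝ)^(m:ℤ) * (p:ℝ)^(-(m:ℤ)) := by
          apply mul_le_mul_of_nonneg_right h (zpow_nonneg hp0.le _)
      _ = 1 := by rw [← zpow_add₀ hp0.ne']; simp
  set z : ℤ_[p] := ⟨q * (p:ℚ_[p])^(m:ℤ), hz⟩ with hzdef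
  have hk := PadicInt.appr_lt z m
  refine ⟨⟨z.appr m, hk⟩, ?_⟩
  have hspec := PadicInt.appr_spec m z
  have hnorm : ‖z - (z.appr m : ℤ_[p])‖ ≤ (p:ℝ)^(-(m:ℤ)) := by
    rw [show ((m:ℤ)) = ((m:ℕ):ℤ) from rfl]
    exact ((z - (z.appr m : ℤ_[p])).norm_le_pow_iff_mem_span_pow m).2 hspec
  have key : q - ((z.appr m : ℕ):ℚ_[p]) * (p:ℚ_[p])^(-(m:ℤ))
      = ((z : ℚ_[p]) - (z.appr m : ℚ_[p])) * (p:ℚ_[p])^(-(m:ℤ)) := by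
    have : (z : ℚ_[p]) = q * (p:ℚ_[p])^(m:ℤ) := rfl
    rw [this, sub_mul, mul_assoc, ← zpow_add₀, add_neg_cancel, zpow_zero, mul_one]
    exact_mod_cast (Fact.out : p.Prime).ne_zero
  simp only [Fin.val_mk]
  rw [key, norm_mul, Padic.norm_p_zpow, neg_neg]
  have hcast : ‖(z:ℚ_[p]) - ((z.appr m : ℤ_[p]) : ℚ_[p])‖ ≤ (p:ℝ)^(-(m:ℤ)) := by
    rw [← PadicInt.coe_sub, ← PadicInt.norm_def]; exact hnorm
  calc ‖(z:ℚ_[p]) - ((z.appr m :ℕ): ℚ_[p])‖ * (p:ℝ)^(m:ℤ)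
      ≤ (p:ℝ)^(-(m:ℤ)) * (p:ℝ)^(m:ℤ) := by
        apply mul_le_mul_of_nonneg_right _ (zpow_nonneg hp0.le _)
        exact_mod_cast hcast
    _ = 1 := by rw [← zpow_add₀ hp0.ne']; simp

lemma measure_ball_le (μ : Measure (Fin n → ℚ_[p])) [μ.IsAddHaarMeasure]
    (hμ : μ (closedBall (0 : Fin n → ℚ_[p]) 1) = 1) (m : ℕ) :
    μ (closedBall (0 : Fin n → ℚ_[p]) ((p:ℝ)^(m:ℤ))) ≤ ((p:ℝ≥0∞))^(m*n) := by
  classical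
  set c : (Fin n → Fin (p^m)) → (Fin n → ℚ_[p]) :=
    fun v j => ((v j : ℕ):ℚ_[p]) * ((p:ℚ_[p]))^(-(m:ℤ)) with hc
  have hcover : closedBall (0 : Fin n → ℚ_[p]) ((p:ℝ)^(m:ℤ)) ⊆
      ⋃ v : Fin n → Fin (p^m), (fun x => x + (- c v)) ⁻¹' closedBall 0 1 := by
    intro x hx
    rw [mem_closedBall, dist_zero_right] at hx
    have hcoord : ∀ j, ∃ k : Fin (p^m), ‖x j - ((k:ℕ):ℚ_[p]) * ((p:ℚ_[p]))^(-(m:ℤ))‖ ≤ 1 :=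
      fun j => padic_approx m (x j) ((norm_le_pi_norm x j).trans hx)
    choose v hv using hcoord
    refine Set.mem_iUnion.2 ⟨v, ?_⟩
    simp only [Set.mem_preimage, mem_closedBall, dist_zero_right]
    rw [← sub_eq_add_neg]
    exact pi_norm_le_iff_of_nonneg zero_le_one |>.2 fun j => hv j
  calc μ (closedBall (0 : Fin n → ℚ_[p]) ((p:ℝ)^(m:ℤ)))
      ≤ μ (⋃ v : Fin n → Fin (p^m), (fun x => x + (- c v)) ⁻¹' closedBall 0 1) :=
        measure_mono hcover
    _ ≤ ∑' v : Fin n → Fin (p^m), μ ((fun x => x + (- c v)) ⁻¹' closedBall 0 1) :=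
        measure_iUnion_le _
    _ = ∑' v : Fin n → Fin (p^m), (1:ℝ≥0∞) := by
        congr 1; funext v
        rw [measure_preimage_add_right μ _ _, hμ]
    _ = (Fintype.card (Fin n → Fin (p^m)) : ℝ≥0∞) := by
        simp [tsum_eq_sum (s := Finset.univ) (by simp), Finset.sum_const, nsmul_eq_mul]
    _ ≤ ((p:ℝ≥0∞))^(m*n) := by
        rw [Fintype.card_fun]
        simp only [Fintype.card_fin]
        rw [Nat.cast_pow, Nat.cast_pow]
        rw [← pow_mul]

lemma summable_aux (p n : ℕ) (hp : 1 < (p:ℝ)) (t C₀ β : ℝ) (ht : 0 < t) (hC₀ : 0 < C₀)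
    (hβ : 0 < β) :
    Summable (fun m : ℕ => Real.exp (-(t * (C₀ * ((p:ℝ)^m) ^ β))) * (p:ℝ)^((m+1)*n)) := by
  set r : ℝ := (p:ℝ) ^ β with hr
  have hr1 : 1 < r := Real.one_lt_rpow_iff_of_pos (by linarith) |>.2 (Or.inl ⟨hp, hβ⟩)
  set a : ℕ → ℝ := fun m => Real.exp (-(t * (C₀ * ((p:ℝ)^m) ^ β))) * (p:ℝ)^((m+1)*n) with ha
  have hp0 : (0:ℝ) < p := by linarith
  have hapos : ∀ m, 0 < a m := fun m =>
    mul_pos (Real.exp_pos _) (pow_pos hp0 _)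
  apply summable_of_ratio_norm_eventually_le (r := 1/2) (by norm_num)
  have hbig : Tendsto (fun m : ℕ => t * C₀ * (((p:ℝ)^m)^β) * (r - 1)) atTop atTop := by
    apply Tendsto.atTop_mul_const (by linarith)
    apply Tendsto.const_mul_atTop (mul_pos ht hC₀)
    exact (tendsto_rpow_atTop hβ).comp (tendsto_pow_atTop_atTop_of_one_lt hp)
  have hev : ∀ᶠ m : ℕ in atTop, 2 * (p:ℝ)^n ≤ Real.exp (t * C₀ * (((p:ℝ)^m)^β) * (r - 1)) := by
    filter_upwards [hbig.eventually_ge_atTop (Real.log (2 * (p:ℝ)^n))] with m hm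
    calc 2*(p:ℝ)^n = Real.exp (Real.log (2*(p:ℝ)^n)) := by
          rw [Real.exp_log]; positivity
      _ ≤ _ := Real.exp_le_exp.2 hm
  filter_upwards [hev] with m hm
  rw [Real.norm_eq_abs, Real.norm_eq_abs, abs_of_pos (hapos _), abs_of_pos (hapos _)]
  have hkey : ((p:ℝ)^(m+1))^β = ((p:ℝ)^m)^β * r := by
    rw [pow_succ, Real.mul_rpow (by positivity) (by positivity)]
  have hQ : (0:ℝ) < (p:ℝ)^((m+1)*n) := pow_pos hp0 _
  have hsplit : a (m+1) =
      Real.exp (-(t * (C₀ * (((p:ℝ)^m)^β * r)))) * (p:ℝ)^n * (p:ℝ)^((m+1)*n) := by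
    simp only [ha, hkey]
    rw [show (m+1+1)*n = n + (m+1)*n by ring, pow_add]
    ring
  rw [hsplit]
  have hmain : Real.exp (-(t * (C₀ * (((p:ℝ)^m)^β * r)))) * (p:ℝ)^n
      ≤ 1/2 * Real.exp (-(t * (C₀ * ((p:ℝ)^m)^β))) := by
    have h2 : (p:ℝ)^n ≤ Real.exp (t * C₀ * (((p:ℝ)^m)^β) * (r - 1)) / 2 := by
      rw [le_div_iff₀ (by norm_num : (0:ℝ) < 2)]
      calc (p:ℝ)^n * 2 = 2 * (p:ℝ)^n := by ring
        _ ≤ _ := hm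
    calc Real.exp (-(t * (C₀ * (((p:ℝ)^m)^β * r)))) * (p:ℝ)^n
        ≤ Real.exp (-(t * (C₀ * (((p:ℝ)^m)^β * r)))) *
            (Real.exp (t * C₀ * (((p:ℝ)^m)^β) * (r - 1)) / 2) := by
          apply mul_le_mul_of_nonneg_left h2 (Real.exp_pos _).le
      _ = 1/2 * (Real.exp (-(t * (C₀ * (((p:ℝ)^m)^β * r)))) *
            Real.exp (t * C₀ * (((p:ℝ)^m)^β) * (r - 1))) := by ring
      _ = 1/2 * Real.exp (-(t * (C₀ * ((p:ℝ)^m)^β))) := by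
          rw [← Real.exp_add]
          congr 1
          ring
  calc Real.exp (-(t * (C₀ * (((p:ℝ)^m)^β * r)))) * (p:ℝ)^n * (p:ℝ)^((m+1)*n)
      ≤ (1/2 * Real.exp (-(t * (C₀ * ((p:ℝ)^m)^β)))) * (p:ℝ)^((m+1)*n) :=
        mul_le_mul_of_nonneg_right hmain hQ.le
    _ = 1/2 * a m := by simp only [ha]; ring

lemma exp_lintegral_lt_top (μ : Measure (Fin n → ℚ_[p])) [μ.IsAddHaarMeasure]
    (hμ : μ (closedBall (0 : Fin n → ℚ_[p]) 1) = 1)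
    (t C₀ β : ℝ) (ht : 0 < t) (hC₀ : 0 < C₀) (hβ : 0 < β)
    (A : (Fin n → ℚ_[p]) → ℝ) (hlow : ∀ ξ, C₀ * ‖ξ‖ ^ β ≤ A ξ) :
    ∫⁻ ξ in {ξ : Fin n → ℚ_[p] | 1 < ‖ξ‖}, ENNReal.ofReal (Real.exp (-(t * A ξ))) ∂μ < ⊤ := by
  have hp1 : (1:ℝ) < p := by exact_mod_cast (Fact.out : p.Prime).one_lt
  have hp0 : (0:ℝ) < p := by linarith
  set D : ℕ → Set (Fin n → ℚ_[p]) := fun m =>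
    closedBall 0 ((p:ℝ)^((m+1:ℕ):ℤ)) \ closedBall 0 ((p:ℝ)^(m:ℤ)) with hD
  have hcover : {ξ : Fin n → ℚ_[p] | 1 < ‖ξ‖} ⊆ ⋃ m, D m := by
    intro ξ hξ
    simp only [Set.mem_setOf_eq] at hξ
    have hex : ∃ k : ℕ, ‖ξ‖ ≤ (p:ℝ)^((k:ℕ):ℤ) := by
      obtain ⟨k, hk⟩ := pow_unbounded_of_one_lt ‖ξ‖ hp1
      exact ⟨k, by rw [zpow_natCast]; exact hk.le⟩
    classical
    let k := Nat.find hex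
    have hk1 : 1 ≤ k := by
      rcases Nat.eq_zero_or_pos k with h0 | h; swap
      · exact h
      · exfalso
        have := Nat.find_spec hex
        rw [show Nat.find hex = k from rfl, h0] at this
        simp only [Nat.cast_zero, zpow_zero] at this
        linarith
    refine Set.mem_iUnion.2 ⟨k - 1, ?_⟩
    constructor
    · rw [mem_closedBall, dist_zero_right]
      have : k - 1 + 1 = k := Nat.succ_pred_eq_of_pos hk1
      rw [this]
      exact Nat.find_spec hex
    · rw [mem_closedBall, dist_zero_right]
      push_neg
      rcases Nat.lt_or_ge (k-1) 1 with h | h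
      · have hk0 : k - 1 = 0 := by omega
        rw [hk0]
        simpa using hξ
      · have := Nat.find_min hex (m := k - 1) (by omega)
        push_neg at this
        exact this
  have hDmeas : ∀ m, MeasurableSet (D m) :=
    fun m => (isClosed_closedBall.measurableSet).diff (isClosed_closedBall.measurableSet)
  have hbound : ∀ m, ∫⁻ ξ in D m, ENNReal.ofReal (Real.exp (-(t * A ξ))) ∂μ ≤
      ENNReal.ofReal (Real.exp (-(t * (C₀ * ((p:ℝ)^m) ^ β))) * (p:ℝ)^((m+1)*n)) := by
    intro m
    have hpt : ∀ ξ ∈ D m, ENNReal.ofReal (Real.exp (-(t * A ξ))) ≤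
        ENNReal.ofReal (Real.exp (-(t * (C₀ * ((p:ℝ)^m) ^ β)))) := by
      intro ξ hξ
      apply ENNReal.ofReal_le_ofReal
      apply Real.exp_le_exp.2
      rw [neg_le_neg_iff]
      apply mul_le_mul_of_nonneg_left _ ht.le
      calc C₀ * ((p:ℝ)^m) ^ β ≤ C₀ * ‖ξ‖ ^ β := by
            apply mul_le_mul_of_nonneg_left _ hC₀.le
            apply Real.rpow_le_rpow (by positivity) _ hβ.le
            have hmem : ¬ ‖ξ‖ ≤ (p:ℝ)^(m:ℤ) := by
              have := hξ.2
              rwa [mem_closedBall, dist_zero_right] at this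
            push_neg at hmem
            rw [zpow_natCast] at hmem
            exact hmem.le
        _ ≤ A ξ := hlow ξ
    calc ∫⁻ ξ in D m, ENNReal.ofReal (Real.exp (-(t * A ξ))) ∂μ
        ≤ ∫⁻ _ in D m, ENNReal.ofReal (Real.exp (-(t * (C₀ * ((p:ℝ)^m) ^ β)))) ∂μ :=
          setLIntegral_mono' (hDmeas m) hpt
      _ = ENNReal.ofReal (Real.exp (-(t * (C₀ * ((p:ℝ)^m) ^ β)))) * μ (D m) :=
          setLIntegral_const _ _
      _ ≤ ENNReal.ofReal (Real.exp (-(t * (C₀ * ((p:ℝ)^m) ^ β)))) * ((p:ℝ≥0∞))^((m+1)*n) := by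
          apply mul_le_mul_right
          calc μ (D m) ≤ μ (closedBall 0 ((p:ℝ)^((m+1:ℕ):ℤ))) := measure_mono Set.diff_subset
            _ ≤ ((p:ℝ≥0∞))^((m+1)*n) := measure_ball_le μ hμ (m+1)
      _ = ENNReal.ofReal (Real.exp (-(t * (C₀ * ((p:ℝ)^m) ^ β))) * (p:ℝ)^((m+1)*n)) := by
          rw [ENNReal.ofReal_mul (Real.exp_pos _).le, ENNReal.ofReal_pow hp0.le]
          congr 2
          simp [ENNReal.ofReal_natCast]
  calc ∫⁻ ξ in {ξ : Fin n → ℚ_[p] | 1 < ‖ξ‖}, ENNReal.ofReal (Real.exp (-(t * A ξ))) ∂μ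
      ≤ ∫⁻ ξ in ⋃ m, D m, ENNReal.ofReal (Real.exp (-(t * A ξ))) ∂μ :=
        lintegral_mono_set hcover
    _ ≤ ∑' m, ∫⁻ ξ in D m, ENNReal.ofReal (Real.exp (-(t * A ξ))) ∂μ := lintegral_iUnion_le _ _
    _ ≤ ∑' m, ENNReal.ofReal (Real.exp (-(t * (C₀ * ((p:ℝ)^m) ^ β))) * (p:ℝ)^((m+1)*n)) :=
        ENNReal.tsum_le_tsum hbound
    _ = ENNReal.ofReal (∑' m, Real.exp (-(t * (C₀ * ((p:ℝ)^m) ^ β))) * (p:ℝ)^((m+1)*n)) :=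
        (ENNReal.ofReal_tsum_of_nonneg (fun m => by positivity)
          (summable_aux p n hp1 t C₀ β ht hC₀ hβ)).symm
    _ < ⊤ := ENNReal.ofReal_lt_top

end PadicHeatAux

end Aux


/-- For every `t ≥ 0`, `T(t)` is a well-defined bounded linear operator from
`L²₀(ℤ_p^n)` to itself: for `t > 0` and `f ∈ L²₀(ℤ_p^n)` the convolution `K(·,t) ∗ f` is square
integrable, vanishes (a.e.) outside `ℤ_p^n`, has zero mean, and its `L²` norm is bounded by a
constant (independent of `f`) times that of `f`. -/
theorem heat_semigroup_bounded_on_L20 {p n : ℕ} [Fact p.Prime] (hn : 0 < n)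
    (μ : Measure (Fin n → ℚ_[p])) [μ.IsAddHaarMeasure]
    (hμ : μ (closedBall (0 : Fin n → ℚ_[p]) 1) = 1)
    (β C₀ C₁ : ℝ) (hβ : 0 < β) (hC₀ : 0 < C₀) (hC₁ : 0 < C₁)
    (A : (Fin n → ℚ_[p]) → ℝ) (g : ℝ → ℝ)
    (hrad : ∀ ξ : Fin n → ℚ_[p], A ξ = g ‖ξ‖)
    (hlow : ∀ ξ : Fin n → ℚ_[p], C₀ * ‖ξ‖ ^ β ≤ A ξ)
    (hupp : ∀ ξ : Fin n → ℚ_[p], A ξ ≤ C₁ * ‖ξ‖ ^ β)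
    (ψ : ℚ_[p] → ℂ) (hψcont : Continuous ψ)
    (hψadd : ∀ a b : ℚ_[p], ψ (a + b) = ψ a * ψ b)
    (hψnorm : ∀ a : ℚ_[p], ‖ψ a‖ = 1)
    (hψtriv : ∀ a : ℚ_[p], ‖a‖ ≤ 1 → ψ a = 1)
    (hψnontriv : ∃ a : ℚ_[p], ‖a‖ ≤ p ∧ ψ a ≠ 1) :
    ∀ t : ℝ, 0 ≤ t → ∃ Ct : ℝ≥0∞, Ct ≠ ⊤ ∧
      ∀ f : (Fin n → ℚ_[p]) → ℂ, MemL20 μ f →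
        MemL20 μ (heatT μ ψ A t f) ∧
        eLpNorm (heatT μ ψ A t f) 2 μ ≤ Ct * eLpNorm f 2 μ := by
  intro t ht0
  have hp1 : (1:ℝ) < p := by exact_mod_cast (Fact.out : p.Prime).one_lt
  rcases eq_or_lt_of_le ht0 with rfl | ht
  · refine ⟨1, ENNReal.one_ne_top, fun f hf => ?_⟩
    have hT0 : heatT μ ψ A 0 f = f := by
      funext x; rw [heatT, if_pos rfl]
    rw [hT0]
    exact ⟨hf, by simp⟩
  · -- the case `t > 0`
    set B : Set (Fin n → ℚ_[p]) := closedBall (0 : Fin n → ℚ_[p]) 1 with hBdef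
    have hB : MeasurableSet B := isClosed_closedBall.measurableSet
    set S : Set (Fin n → ℚ_[p]) := {ξ : Fin n → ℚ_[p] | 1 < ‖ξ‖} with hSdef
    have hSB : S = Bᶜ := by
      ext ξ
      rw [hSdef, hBdef]
      simp only [Set.mem_setOf_eq, Set.mem_compl_iff, mem_closedBall,
        dist_zero_right, not_le]
    have hS : MeasurableSet S := by rw [hSB]; exact hB.compl
    have hA : A = fun ξ => g ‖ξ‖ := funext hrad
    have hAmeas : Measurable A := by
      rw [hA]; exact PadicHeatAux.measurable_g_norm g
    have hexp : Measurable (fun ξ : Fin n → ℚ_[p] => Real.exp (-(t * A ξ))) :=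
      Real.measurable_exp.comp ((hAmeas.const_mul t).neg)
    have hIntExp : IntegrableOn (fun ξ : Fin n → ℚ_[p] => Real.exp (-(t * A ξ))) S μ := by
      refine ⟨hexp.aestronglyMeasurable.restrict, ?_⟩
      rw [hasFiniteIntegral_iff_ofReal (ae_of_all _ fun ξ => (Real.exp_pos _).le)]
      exact PadicHeatAux.exp_lintegral_lt_top μ hμ t C₀ β ht hC₀ hβ A hlow
    set Mr : ℝ := ∫ ξ in S, Real.exp (-(t * A ξ)) ∂μ with hMrdef
    have hMr0 : 0 ≤ Mr := integral_nonneg fun ξ => (Real.exp_pos _).le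
    -- continuity of the inner phase
    have hdotc1 : ∀ ξ : Fin n → ℚ_[p], Continuous fun y : Fin n → ℚ_[p] => dotQ y ξ := by
      intro ξ
      unfold dotQ
      exact continuous_finset_sum _ fun j _ => (continuous_apply j).mul continuous_const
    have hdotc2 : ∀ y : Fin n → ℚ_[p], Continuous fun ξ : Fin n → ℚ_[p] => dotQ y ξ := by
      intro y
      unfold dotQ
      exact continuous_finset_sum _ fun j _ => continuous_const.mul (continuous_apply j)
    have hnormint : ∀ y ξ, ‖ψ (-dotQ y ξ) * ((Real.exp (-(t * A ξ)) : ℝ) : ℂ)‖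
        = Real.exp (-(t * A ξ)) := by
      intro y ξ
      rw [norm_mul, hψnorm, one_mul, Complex.norm_real, Real.norm_eq_abs,
        abs_of_pos (Real.exp_pos _)]
    have hAESM : ∀ y : Fin n → ℚ_[p], AEStronglyMeasurable
        (fun ξ => ψ (-dotQ y ξ) * ((Real.exp (-(t * A ξ)) : ℝ) : ℂ)) (μ.restrict S) := by
      intro y
      exact ((hψcont.comp (hdotc2 y).neg).aestronglyMeasurable).mul
        ((Complex.measurable_ofReal.comp hexp).aestronglyMeasurable.restrict)
    have hKintegrand : ∀ y : Fin n → ℚ_[p], Integrable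
        (fun ξ => ψ (-dotQ y ξ) * ((Real.exp (-(t * A ξ)) : ℝ) : ℂ)) (μ.restrict S) := by
      intro y
      refine Integrable.mono' hIntExp (hAESM y) (ae_of_all _ fun ξ => ?_)
      rw [hnormint y ξ]
    have hKbound : ∀ y, ‖heatK μ ψ A t y‖ ≤ Mr := by
      intro y
      calc ‖heatK μ ψ A t y‖
          ≤ ∫ ξ in S, ‖ψ (-dotQ y ξ) * ((Real.exp (-(t * A ξ)) : ℝ) : ℂ)‖ ∂μ :=
            norm_integral_le_integral_norm _
        _ = Mr := by
            rw [hMrdef]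
            exact integral_congr_ae (ae_of_all _ fun ξ => hnormint y ξ)
    have hKcont : Continuous (heatK μ ψ A t) := by
      show Continuous fun y => ∫ ξ in S, ψ (-dotQ y ξ) * ((Real.exp (-(t * A ξ)) : ℝ) : ℂ) ∂μ
      apply continuous_of_dominated hAESM
        (fun y => ae_of_all _ fun ξ => le_of_eq (hnormint y ξ)) hIntExp
      exact ae_of_all _ fun ξ =>
        (hψcont.comp (hdotc1 ξ).neg).mul continuous_const
    -- the kernel vanishes outside the unit ball
    have hKzero : ∀ y, 1 < ‖y‖ → heatK μ ψ A t y = 0 := by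
      intro y hy
      obtain ⟨j, hj⟩ := PadicHeatAux.exists_coord_gt y hy
      obtain ⟨a, hap, ha1⟩ := hψnontriv
      have hyj0 : y j ≠ 0 := by
        intro h0; rw [h0, norm_zero] at hj; linarith
      have hpyj : (p:ℝ) ≤ ‖y j‖ := PadicHeatAux.padic_ge_of_one_lt (y j) hj
      set c : ℚ_[p] := a / y j with hcdef
      have hc1 : ‖c‖ ≤ 1 := by
        rw [hcdef, norm_div, div_le_one (by linarith : (0:ℝ) < ‖y j‖)]
        exact hap.trans hpyj
      set η : Fin n → ℚ_[p] := fun i => if i = j then c else 0 with hηdef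
      have hη1 : ‖η‖ ≤ 1 := by
        apply pi_norm_le_iff_of_nonneg zero_le_one |>.2
        intro i
        by_cases h : i = j <;> simp [hηdef, h, hc1]
      have hdη : dotQ y η = a := by
        unfold dotQ
        rw [Finset.sum_eq_single j]
        · simp only [hηdef, if_pos rfl, hcdef]
          field_simp
        · intro i _ hij
          simp [hηdef, hij]
        · intro h
          exact absurd (Finset.mem_univ j) h
      have hψ0 : ψ 0 = 1 := hψtriv 0 (by simp)
      have hψa : ψ (-a) ≠ 1 := by
        intro h
        apply ha1
        have := hψadd a (-a)
        rw [add_neg_cancel, hψ0, h, mul_one] at this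
        exact this.symm
      set G : (Fin n → ℚ_[p]) → ℂ :=
        fun ξ => ψ (-dotQ y ξ) * ((Real.exp (-(t * A ξ)) : ℝ) : ℂ) with hGdef
      have hmemS : ∀ ξ : Fin n → ℚ_[p], ξ ∈ S → ξ + η ∈ S := by
        intro ξ hξ
        have : ‖ξ + η‖ = ‖ξ‖ := PadicHeatAux.pi_norm_add_eq ξ η hη1 hξ
        simp only [hSdef, Set.mem_setOf_eq] at hξ ⊢
        rw [this]; exact hξ
      have hmemS' : ∀ ξ : Fin n → ℚ_[p], ξ + η ∈ S → ξ ∈ S := by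
        intro ξ hξ
        simp only [hSdef, Set.mem_setOf_eq] at hξ ⊢
        have h1 : ‖(ξ + η) + (-η)‖ = ‖ξ + η‖ :=
          PadicHeatAux.pi_norm_add_eq (ξ + η) (-η) (by rwa [norm_neg]) hξ
        have h2 : (ξ + η) + (-η) = ξ := by abel
        rw [← h2, h1]
        exact hξ
      have h2 : ∀ ξ, S.indicator G (ξ + η) = ψ (-a) * S.indicator G ξ := by
        intro ξ
        by_cases hξ : ξ ∈ S
        · rw [Set.indicator_of_mem (hmemS ξ hξ), Set.indicator_of_mem hξ]
          have hnorm : ‖ξ + η‖ = ‖ξ‖ := PadicHeatAux.pi_norm_add_eq ξ η hη1 hξ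
          have hAeq : A (ξ + η) = A ξ := by rw [hrad, hrad, hnorm]
          have hdadd : dotQ y (ξ + η) = dotQ y ξ + dotQ y η := by
            unfold dotQ
            rw [← Finset.sum_add_distrib]
            congr 1; funext i
            simp [mul_add]
          rw [hGdef]
          simp only
          rw [hAeq, hdadd, hdη, neg_add, hψadd]
          ring
        · rw [Set.indicator_of_notMem (fun hc => hξ (hmemS' ξ hc)),
            Set.indicator_of_notMem hξ, mul_zero]
      have hKrw : heatK μ ψ A t y = ∫ ξ, S.indicator G ξ ∂μ := by
        rw [integral_indicator hS]
        rfl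
      have key : heatK μ ψ A t y = ψ (-a) * heatK μ ψ A t y := by
        conv_lhs => rw [hKrw, ← integral_add_right_eq_self (S.indicator G) η]
        calc ∫ ξ, S.indicator G (ξ + η) ∂μ = ∫ ξ, ψ (-a) * S.indicator G ξ ∂μ := by
              congr 1; funext ξ; exact h2 ξ
          _ = ψ (-a) * ∫ ξ, S.indicator G ξ ∂μ := integral_const_mul _ _
          _ = ψ (-a) * heatK μ ψ A t y := by rw [← hKrw]
      by_contra hK0
      apply hψa
      have := key.symm
      calc ψ (-a) = ψ (-a) * heatK μ ψ A t y * (heatK μ ψ A t y)⁻¹ := by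
            field_simp
        _ = heatK μ ψ A t y * (heatK μ ψ A t y)⁻¹ := by rw [← key]
        _ = 1 := by field_simp
    -- integrability of the kernel
    have hindint : Integrable (B.indicator fun _ => Mr) μ :=
      (integrable_indicator_iff hB).2
        (integrableOn_const (by rw [hμ]; exact ENNReal.one_ne_top))
    have hKint : Integrable (heatK μ ψ A t) μ := by
      refine Integrable.mono' hindint
        hKcont.aestronglyMeasurable (ae_of_all _ fun y => ?_)
      by_cases hyB : y ∈ B
      · rw [Set.indicator_of_mem hyB]
        exact hKbound y
      · have hy1 : 1 < ‖y‖ := by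
          simp only [hBdef, mem_closedBall, dist_zero_right, not_le] at hyB
          exact hyB
        rw [hKzero y hy1, norm_zero, Set.indicator_of_notMem hyB]
    refine ⟨ENNReal.ofReal Mr, ENNReal.ofReal_ne_top, fun f hf => ?_⟩
    obtain ⟨hf2, hfae, hf0⟩ := hf
    have hfind : f =ᵐ[μ] B.indicator f := by
      filter_upwards [hfae] with x hx
      by_cases hxB : x ∈ B
      · rw [Set.indicator_of_mem hxB]
      · rw [Set.indicator_of_notMem hxB]
        apply hx
        simp only [hBdef, mem_closedBall, dist_zero_right, not_le] at hxB
        exact hxB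
    haveI : IsFiniteMeasure (μ.restrict B) :=
      ⟨by rw [Measure.restrict_apply_univ, hμ]; exact ENNReal.one_lt_top⟩
    have hfint : Integrable f μ := by
      have h1 : IntegrableOn f B μ := (hf2.restrict B).integrable one_le_two
      exact ((integrable_indicator_iff hB).2 h1).congr hfind.symm
    set L1f : ℝ := ∫ y, ‖f y‖ ∂μ with hL1fdef
    have hT : heatT μ ψ A t f = fun x => ∫ y, heatK μ ψ A t y * f (x - y) ∂μ := by
      funext x
      rw [heatT, if_neg ht.ne']
    have hsubqmp : ∀ x : Fin n → ℚ_[p],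
        Measure.QuasiMeasurePreserving (fun y : Fin n → ℚ_[p] => x - y) μ μ :=
      fun x => (Measure.measurePreserving_sub_left μ x).quasiMeasurePreserving
    have hconvAESM : ∀ x, AEStronglyMeasurable
        (fun y => heatK μ ψ A t y * f (x - y)) μ := by
      intro x
      exact hKcont.aestronglyMeasurable.mul
        (hf2.1.comp_quasiMeasurePreserving (hsubqmp x))
    have hfnormint : ∀ x : Fin n → ℚ_[p], Integrable (fun y => ‖f (x - y)‖) μ := by
      intro x
      exact ((Measure.measurePreserving_sub_left μ x).integrable_comp
        hfint.norm.aestronglyMeasurable).mpr hfint.norm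
    have hconvInt : ∀ x, Integrable (fun y => heatK μ ψ A t y * f (x - y)) μ := by
      intro x
      refine Integrable.mono' ((hfnormint x).const_mul Mr) (hconvAESM x)
        (ae_of_all _ fun y => ?_)
      show ‖heatK μ ψ A t y * f (x - y)‖ ≤ Mr * ‖f (x - y)‖
      rw [norm_mul]
      exact mul_le_mul_of_nonneg_right (hKbound y) (norm_nonneg _)
    have hTbound : ∀ x, ‖heatT μ ψ A t f x‖ ≤ Mr * L1f := by
      intro x
      rw [hT]
      calc ‖∫ y, heatK μ ψ A t y * f (x - y) ∂μ‖
          ≤ ∫ y, ‖heatK μ ψ A t y * f (x - y)‖ ∂μ := norm_integral_le_integral_norm _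
        _ ≤ ∫ y, Mr * ‖f (x - y)‖ ∂μ := by
            apply integral_mono (hconvInt x).norm ((hfnormint x).const_mul Mr)
            intro y
            show ‖heatK μ ψ A t y * f (x - y)‖ ≤ Mr * ‖f (x - y)‖
            rw [norm_mul]
            exact mul_le_mul_of_nonneg_right (hKbound y) (norm_nonneg _)
        _ = Mr * ∫ y, ‖f (x - y)‖ ∂μ := integral_const_mul _ _
        _ = Mr * L1f := by
            rw [hL1fdef, integral_sub_left_eq_self (fun z => ‖f z‖) μ x]
    have hTzero : ∀ x, 1 < ‖x‖ → heatT μ ψ A t f x = 0 := by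
      intro x hx
      rw [hT]
      apply integral_eq_zero_of_ae
      filter_upwards [(hsubqmp x).ae hfae] with y hy
      by_cases hyB : ‖y‖ ≤ 1
      · have hnx : ‖x - y‖ = ‖x‖ := by
          rw [sub_eq_add_neg]
          exact PadicHeatAux.pi_norm_add_eq x (-y) (by rwa [norm_neg]) hx
        rw [hy (by rw [hnx]; exact hx), mul_zero]
        rfl
      · push_neg at hyB
        rw [hKzero y hyB, zero_mul]
        rfl
    have hTcont : Continuous (heatT μ ψ A t f) := by
      rw [hT]
      have hrw : ∀ x : Fin n → ℚ_[p], ∫ y, heatK μ ψ A t y * f (x - y) ∂μ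
          = ∫ z, heatK μ ψ A t (x - z) * f z ∂μ := by
        intro x
        rw [← integral_sub_left_eq_self (fun z => heatK μ ψ A t (x - z) * f z) μ x]
        congr 1; funext y
        rw [sub_sub_cancel]
      simp only [hrw]
      refine continuous_of_dominated (F := fun x z => heatK μ ψ A t (x - z) * f z)
        (bound := fun z => Mr * ‖f z‖) (fun x => ?_) (fun x => ae_of_all _ fun z => ?_)
        (hfint.norm.const_mul Mr) (ae_of_all _ fun z => ?_)
      · exact ((hKcont.comp (continuous_const.sub continuous_id)).aestronglyMeasurable).mul
          hfint.1
      · show ‖heatK μ ψ A t (x - z) * f z‖ ≤ Mr * ‖f z‖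
        rw [norm_mul]
        exact mul_le_mul_of_nonneg_right (hKbound _) (norm_nonneg _)
      · exact (hKcont.comp (continuous_id.sub continuous_const)).mul continuous_const
    -- L² bounds
    have hL1f0 : 0 ≤ L1f := integral_nonneg fun y => norm_nonneg _
    have hstep1 : eLpNorm (heatT μ ψ A t f) 2 μ ≤
        eLpNorm (B.indicator fun _ => (Mr * L1f : ℝ)) 2 μ := by
      apply eLpNorm_mono
      intro x
      by_cases hxB : x ∈ B
      · rw [Set.indicator_of_mem hxB, Real.norm_eq_abs, abs_of_nonneg (by positivity)]
        exact hTbound x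
      · have hx1 : 1 < ‖x‖ := by
          simp only [hBdef, mem_closedBall, dist_zero_right, not_le] at hxB
          exact hxB
        rw [hTzero x hx1, norm_zero, Set.indicator_of_notMem hxB]
        simp
    have hstep2 : eLpNorm (B.indicator fun _ => (Mr * L1f : ℝ)) 2 μ
        = ENNReal.ofReal (Mr * L1f) := by
      rw [eLpNorm_indicator_const hB two_ne_zero ENNReal.ofNat_ne_top, hμ,
        ENNReal.one_rpow, mul_one]
      exact Real.enorm_eq_ofReal (by positivity)
    have hstep4 : ENNReal.ofReal L1f ≤ eLpNorm f 2 μ := by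
      have e1 : ENNReal.ofReal L1f = eLpNorm f 1 μ := by
        rw [hL1fdef, ofReal_integral_norm_eq_lintegral_enorm hfint,
          eLpNorm_one_eq_lintegral_enorm]
      have e2 : eLpNorm f 1 μ = eLpNorm f 1 (μ.restrict B) := by
        rw [eLpNorm_congr_ae hfind, eLpNorm_indicator_eq_eLpNorm_restrict hB]
      have e3 : eLpNorm f 1 (μ.restrict B) ≤ eLpNorm f 2 (μ.restrict B) := by
        have := eLpNorm_le_eLpNorm_mul_rpow_measure_univ (p := 1) (q := 2)
          (μ := μ.restrict B) (f := f) one_le_two hf2.1.restrict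
        rwa [Measure.restrict_apply_univ, hμ, ENNReal.one_rpow, mul_one] at this
      have e4 : eLpNorm f 2 (μ.restrict B) = eLpNorm f 2 μ := by
        rw [← eLpNorm_indicator_eq_eLpNorm_restrict hB, ← eLpNorm_congr_ae hfind]
      rw [e1, e2, ← e4]
      exact e3
    have hfinal : eLpNorm (heatT μ ψ A t f) 2 μ ≤ ENNReal.ofReal Mr * eLpNorm f 2 μ := by
      calc eLpNorm (heatT μ ψ A t f) 2 μ ≤ ENNReal.ofReal (Mr * L1f) :=
            hstep1.trans_eq hstep2
        _ = ENNReal.ofReal Mr * ENNReal.ofReal L1f := ENNReal.ofReal_mul hMr0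
        _ ≤ ENNReal.ofReal Mr * eLpNorm f 2 μ := mul_le_mul_right hstep4 _
    have hMem2 : MemLp (heatT μ ψ A t f) 2 μ := by
      refine ⟨hTcont.aestronglyMeasurable, ?_⟩
      exact lt_of_le_of_lt (hstep1.trans_eq hstep2) ENNReal.ofReal_lt_top
    have hmean : (∫ x, heatT μ ψ A t f x ∂μ) = 0 := by
      have hTc : heatT μ ψ A t f
          = MeasureTheory.convolution (heatK μ ψ A t) f (ContinuousLinearMap.mul ℂ ℂ) μ := by
        funext x
        rw [hT]
        simp [MeasureTheory.convolution, ContinuousLinearMap.mul_apply']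
      rw [hTc, integral_convolution _ hKint hfint, hf0]
      simp
    exact ⟨⟨hMem2, ae_of_all _ hTzero, hmean⟩, hfinal⟩
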